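/- Let a,b ∈ (0,1), c > 0 with a < c and b < c. Define F(x) = ₂F₁(a,b;c;x) and F₁(x) = F(1−x). Then f(x) = x(1−x)F(x)F₁(x) is increasing on (0,1/2] and decreasing on [1/2,1). -/

import Mathlib

/-- The rising factorial (Pochhammer symbol) `(a)ₙ = a(a+1)⋯(a+n−1)`. -/
def ascFac (a : ℝ) : ℕ → ℝ
  | 0 => 1
  | n + 1 => ascFac a n * (a + n)

/-- The Gaussian hypergeometric function `₂F₁(a,b;c;x) = Σ (a)ₙ(b)ₙ/((c)ₙ n!) xⁿ`. -/
noncomputable def hyperF (a b c x : ℝ) : ℝ :=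
  ∑' n : ℕ, ascFac a n * ascFac b n / (ascFac c n * n.factorial) * x ^ n

lemma ascFac_pos {a : ℝ} (ha : 0 < a) (n : ℕ) : 0 < ascFac a n := by
  induction n with
  | zero => norm_num [ascFac]
  | succ n ih => exact mul_pos ih (by positivity)

/-- summability of poly-bounded power series -/
lemma summable_aux {g : ℕ → ℝ} {K : ℝ} {k : ℕ} (hg : ∀ n, |g n| ≤ K * (n+1)^k)
    {x : ℝ} (hx : |x| < 1) : Summable (fun n => g n * x ^ n) := by
  have hx0 : (0:ℝ) ≤ |x| := abs_nonneg x
  have hs1 : Summable (fun n : ℕ => (n:ℝ)^k * |x|^n) :=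
    summable_pow_mul_geometric_of_norm_lt_one k (by rwa [Real.norm_eq_abs, abs_abs])
  have hs2 : Summable (fun n : ℕ => |x|^n) := summable_geometric_of_lt_one hx0 hx
  have hs : Summable (fun n : ℕ => K * (2^k * ((n:ℝ)^k * |x|^n) + 2^k * |x|^n)) :=
    (((hs1.mul_left _).add (hs2.mul_left _)).mul_left K)
  apply Summable.of_norm_bounded hs
  intro n
  have h1 : ((n:ℝ)+1)^k ≤ 2^k * ((n:ℝ)^k + 1) := by
    calc ((n:ℝ)+1)^k ≤ (2 * max (n:ℝ) 1)^k := by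
          apply pow_le_pow_left₀ (by positivity)
          rcases le_or_gt (n:ℝ) 1 with h | h
          · simp [max_eq_right h]; linarith
          · rw [max_eq_left h.le]; linarith
      _ = 2^k * (max (n:ℝ) 1)^k := by rw [mul_pow]
      _ ≤ 2^k * ((n:ℝ)^k + 1) := by
          gcongr
          rcases le_or_gt (n:ℝ) 1 with h | h
          · rw [max_eq_right h]; simp only [one_pow]
            nlinarith [pow_nonneg (Nat.cast_nonneg n : (0:ℝ) ≤ n) k]
          · rw [max_eq_left h.le]; nlinarith [pow_nonneg (Nat.cast_nonneg n : (0:ℝ) ≤ n) k]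
  have hK : 0 ≤ K := le_trans (abs_nonneg _) ((hg 0).trans_eq (by norm_num))
  have : ‖g n * x ^ n‖ = |g n| * |x|^n := by rw [norm_mul, Real.norm_eq_abs, Real.norm_eq_abs, abs_pow]
  rw [this]
  have hxn : (0:ℝ) ≤ |x|^n := by positivity
  calc |g n| * |x|^n ≤ (K * (n+1)^k) * |x|^n := by
        exact mul_le_mul_of_nonneg_right (hg n) hxn
    _ ≤ K * (2^k * ((n:ℝ)^k + 1)) * |x|^n := by
        apply mul_le_mul_of_nonneg_right _ hxn
        exact mul_le_mul_of_nonneg_left h1 hK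
    _ = K * (2^k * ((n:ℝ)^k * |x|^n) + 2^k * |x|^n) := by ring

lemma tsum_shift {h : ℕ → ℝ} (hs : Summable h) (h0 : h 0 = 0) :
    ∑' n, h n = ∑' n, h (n+1) := by
  rw [Summable.tsum_eq_zero_add hs, h0, zero_add]

lemma hasDerivAt_aux {g : ℕ → ℝ} {K : ℝ} {k : ℕ} (hg : ∀ n, |g n| ≤ K * (n+1)^k)
    {x : ℝ} (hx : |x| < 1) :
    HasDerivAt (fun y => ∑' n, g n * y ^ n) (∑' n : ℕ, ((n:ℝ)+1) * g (n+1) * x ^ n) x := by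
  set r : ℝ := (1 + |x|)/2 with hr
  have hx0 : (0:ℝ) ≤ |x| := abs_nonneg x
  have hr1 : r < 1 := by rw [hr]; linarith
  have hr0 : 0 < r := by rw [hr]; linarith
  have hxr : |x| < r := by rw [hr]; linarith
  have hK : 0 ≤ K := le_trans (abs_nonneg _) ((hg 0).trans_eq (by norm_num))
  -- the summable bound
  set u : ℕ → ℝ := fun n => K * ((n:ℝ)+1)^(k+1) * r^(n-1) with hu
  have hus : Summable u := by
    rw [← summable_nat_add_iff 1]
    have : (fun n : ℕ => u (n+1)) = fun n : ℕ => (K * (((n:ℝ)+1)+1)^(k+1)) * r^n := by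
      funext n; simp only [hu, Nat.add_sub_cancel]; push_cast; ring
    rw [this]
    apply summable_aux (K := K * 2^(k+1)) (k := k+1) _ (by rwa [abs_of_pos hr0])
    intro n
    rw [abs_of_nonneg (by positivity)]
    have : ((n:ℝ)+1)+1 ≤ 2*((n:ℝ)+1) := by linarith [Nat.cast_nonneg (α := ℝ) n]
    calc K * (((n:ℝ)+1)+1)^(k+1) ≤ K * (2*((n:ℝ)+1))^(k+1) :=
          mul_le_mul_of_nonneg_left (pow_le_pow_left₀ (by positivity) this _) hK
      _ = K * 2^(k+1) * ((n:ℝ)+1)^(k+1) := by rw [mul_pow]; ring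
  have hball : x ∈ Metric.ball (0:ℝ) r := by
    simpa [Real.dist_eq] using hxr
  have hbound : ∀ n (y : ℝ), y ∈ Metric.ball (0:ℝ) r →
      ‖g n * ((n:ℝ) * y^(n-1))‖ ≤ u n := by
    intro n y hy
    have hyr : |y| ≤ r := by
      simpa [Real.dist_eq] using le_of_lt (Metric.mem_ball.1 hy)
    have : ‖g n * ((n:ℝ) * y^(n-1))‖ = |g n| * ((n:ℝ) * |y|^(n-1)) := by
      rw [norm_mul, Real.norm_eq_abs, Real.norm_eq_abs, abs_mul, abs_pow,
        Nat.abs_cast]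
    rw [this, hu]
    have h1 : |y|^(n-1) ≤ r^(n-1) := pow_le_pow_left₀ (abs_nonneg y) hyr _
    have h2 : (n:ℝ) ≤ (n:ℝ)+1 := by linarith
    calc |g n| * ((n:ℝ) * |y|^(n-1)) ≤ (K * ((n:ℝ)+1)^k) * (((n:ℝ)+1) * r^(n-1)) := by
          apply mul_le_mul (hg n) _ (by positivity) (by positivity)
          exact mul_le_mul h2 h1 (by positivity) (by positivity)
      _ = K * (((n:ℝ)+1)^k * ((n:ℝ)+1)) * r^(n-1) := by ring
      _ = K * ((n:ℝ)+1)^(k+1) * r^(n-1) := by rw [← pow_succ]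
  have hder : HasDerivAt (fun z => ∑' n, g n * z ^ n)
      (∑' n, g n * ((n:ℝ) * x^(n-1))) x := by
    apply hasDerivAt_tsum_of_isPreconnected hus Metric.isOpen_ball
      (convex_ball (0:ℝ) r).isPreconnected
      (fun n y _ => (hasDerivAt_pow n y).const_mul (g n)) hbound hball
      (summable_aux hg hx) hball
  convert hder using 1
  have hsum : Summable (fun n => g n * ((n:ℝ) * x^(n-1))) :=
    Summable.of_norm_bounded hus (fun n => hbound n x hball)
  rw [tsum_shift hsum (by simp)]
  apply tsum_congr
  intro n
  simp only [Nat.add_sub_cancel]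
  push_cast
  ring


lemma gpos (a b c v : ℝ) (ha : 0<a) (ha1 : a<1) (hb : 0<b) (hb1 : b<1)
    (hac : a<c) (hbc : b<c) (hv : 0 < v) (h1 : a+b-c ≤ v) (h3 : c*v ≤ a*b) :
    0 ≤ -c*v^2 + (a*b + c*(a+b) - c)*v + c - a*b*(a+b) := by
  have hc : 0 < c := ha.trans hac
  rcases le_or_gt (a+b) c with hs | hs
  · have h0 : 0 ≤ c - a*b*(a+b) := by nlinarith [mul_pos ha hb]
    nlinarith [mul_nonneg (sub_nonneg.2 h3) h0, mul_nonneg (mul_nonneg hc.le hv.le) (sub_nonneg.2 h3),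
      mul_nonneg (mul_nonneg hc.le hv.le) (sub_pos.2 (show a*b < c by nlinarith)).le,
      mul_nonneg (sub_nonneg.2 h3) hv.le]
  · -- endpoints d = a+b-c and ab/c
    have hd : 0 ≤ -(a+b-c)^2 + (a+b-1)*(a+b-c) + 1 - a*b := by
      nlinarith [mul_nonneg (sub_pos.2 hbc).le (show (0:ℝ) ≤ 1 - (c - a) by linarith)]
    -- g(v) ≥ (hi - v)/(hi - lo) g(lo) + (v-lo)/(hi-lo) g(hi) + c (v-lo)(hi-v)
    nlinarith [mul_nonneg (sub_nonneg.2 h1) (sub_nonneg.2 h3),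
      mul_nonneg (sub_nonneg.2 h1) (mul_nonneg hc.le hd),
      mul_nonneg (sub_nonneg.2 h3) (mul_nonneg hc.le hd),
      mul_nonneg (sub_nonneg.2 h3) (sub_pos.2 (show a*b < c by nlinarith)).le,
      mul_nonneg (sub_nonneg.2 h1) (sub_pos.2 (show a*b < c by nlinarith)).le,
      mul_pos ha hb, mul_pos hc hv]

lemma key (a b c x v : ℝ) (ha : 0<a) (ha1 : a<1) (hb : 0<b) (hb1 : b<1)
    (hac : a<c) (hbc : b<c) (hx : 0<x) (hx1 : x<1)
    (h1 : a+b-c ≤ v) (h2 : a*b*(1-x) ≤ c*v) (h3 : c*v ≤ a*b) :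
    0 ≤ x*v^2 - ((a+b-1)*x + 1-c)*v + (1-a*b)*(1-x) := by
  have hc : 0 < c := ha.trans hac
  have hv : 0 < v := by nlinarith [mul_pos (mul_pos ha hb) (sub_pos.2 hx1)]
  rcases le_or_gt 0 (v^2 - (a+b-1)*v - (1-a*b)) with hA | hA
  · -- a*b*P = (a*b*(x-1) + c*v)*A + v*g(v) ≥ 0
    have hg := gpos a b c v ha ha1 hb hb1 hac hbc hv h1 h3
    have hab : 0 < a*b := mul_pos ha hb
    nlinarith [mul_nonneg (show 0 ≤ a*b*(x-1) + c*v by linarith) hA, mul_nonneg hv.le hg]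
  · -- P(x) ≥ P(1) = v(v-(a+b-c)) ≥ 0
    nlinarith [mul_nonneg hv.le (sub_nonneg.2 h1), mul_nonpos_of_nonneg_of_nonpos (sub_pos.2 hx1).le hA.le]


noncomputable def qco (a b c : ℝ) (n : ℕ) : ℝ :=
  ascFac a n * ascFac b n / (ascFac c n * n.factorial)

lemma qco_succ {a b c : ℝ} (hc : 0<c) (n : ℕ) :
    qco a b c (n+1) * ((c+n)*((n:ℝ)+1)) = qco a b c n * ((a+n)*(b+n)) := by
  have hca := (ascFac_pos hc n).ne'
  have hcn : (0:ℝ) < c + n := by positivity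
  have hfn : ((n.factorial : ℕ) : ℝ) ≠ 0 := Nat.cast_ne_zero.2 n.factorial_ne_zero
  simp only [qco, ascFac, Nat.factorial_succ]
  push_cast
  field_simp

lemma qco_zero (a b c : ℝ) : qco a b c 0 = 1 := by norm_num [qco, ascFac]

lemma qco_pos {a b c : ℝ} (ha : 0<a) (hb : 0<b) (hc : 0<c) (n : ℕ) :
    0 < qco a b c n := by
  have h1 := ascFac_pos ha n; have h2 := ascFac_pos hb n; have h3 := ascFac_pos hc n
  have h4 : (0:ℝ) < n.factorial := by exact_mod_cast n.factorial_pos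
  simp only [qco]; positivity

lemma qco_le_one {a b c : ℝ} (ha : 0<a) (hb : 0<b) (hb1 : b<1) (hac : a<c) (n : ℕ) :
    qco a b c n ≤ 1 := by
  have hc : 0 < c := ha.trans hac
  induction n with
  | zero => rw [qco_zero]
  | succ n ih =>
      have hrec := qco_succ (a := a) (b := b) hc n
      have hq := qco_pos ha hb hc n
      have hcn : (0:ℝ) < (c+n)*((n:ℝ)+1) := by positivity
      have hab : (a+n)*(b+n) ≤ (c+n)*((n:ℝ)+1) := by
        have hn : (0:ℝ) ≤ n := Nat.cast_nonneg n
        nlinarith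
      have : qco a b c (n+1) * ((c+n)*((n:ℝ)+1)) ≤ 1 * ((c+n)*((n:ℝ)+1)) := by
        rw [hrec, one_mul]
        calc qco a b c n * ((a+n)*(b+n)) ≤ 1 * ((a+n)*(b+n)) := by
              apply mul_le_mul_of_nonneg_right ih (by positivity)
          _ = (a+n)*(b+n) := one_mul _
          _ ≤ (c+n)*((n:ℝ)+1) := hab
      exact le_of_mul_le_mul_right (by linarith) hcn

noncomputable def FD (a b c x : ℝ) : ℝ := ∑' n : ℕ, (((n:ℝ)+1) * qco a b c (n+1)) * x^n
noncomputable def FD2 (a b c x : ℝ) : ℝ :=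
  ∑' n : ℕ, ((((n:ℝ)+1) * ((n:ℝ)+2)) * qco a b c (n+2)) * x^n

section

variable {a b c : ℝ} (ha : 0<a) (hb : 0<b) (hb1 : b<1) (hac : a<c)

lemma qb (ha : 0<a) (hb : 0<b) (hb1 : b<1) (hac : a<c) :
    ∀ n : ℕ, |qco a b c n| ≤ 1 * ((n:ℝ)+1)^0 := by
  intro n
  rw [pow_zero, mul_one, abs_of_pos (qco_pos ha hb (ha.trans hac) n)]
  exact qco_le_one ha hb hb1 hac n

lemma db (ha : 0<a) (hb : 0<b) (hb1 : b<1) (hac : a<c) :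
    ∀ n : ℕ, |((n:ℝ)+1) * qco a b c (n+1)| ≤ 1 * ((n:ℝ)+1)^1 := by
  intro n
  have h1 : (0:ℝ) < (n:ℝ)+1 := by positivity
  rw [pow_one, one_mul, abs_mul, abs_of_pos h1,
    abs_of_pos (qco_pos ha hb (ha.trans hac) (n+1))]
  nlinarith [qco_le_one ha hb hb1 hac (n+1), qco_pos ha hb (ha.trans hac) (n+1)]

lemma eb (ha : 0<a) (hb : 0<b) (hb1 : b<1) (hac : a<c) :
    ∀ n : ℕ, |(((n:ℝ)+1) * ((n:ℝ)+2)) * qco a b c (n+2)| ≤ 2 * ((n:ℝ)+1)^2 := by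
  intro n
  have h1 : (0:ℝ) < (n:ℝ)+1 := by positivity
  have h2 : (0:ℝ) < (n:ℝ)+2 := by positivity
  rw [abs_mul, abs_mul, abs_of_pos h1, abs_of_pos h2,
    abs_of_pos (qco_pos ha hb (ha.trans hac) (n+2))]
  have := qco_le_one ha hb hb1 hac (n+2)
  have := qco_pos ha hb (ha.trans hac) (n+2)
  nlinarith

lemma t1b (ha : 0<a) (hb : 0<b) (hb1 : b<1) (hac : a<c) :
    ∀ n : ℕ, |((n:ℝ)*((n:ℝ)+1)) * qco a b c (n+1)| ≤ 1 * ((n:ℝ)+1)^2 := by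
  intro n
  have h0 : (0:ℝ) ≤ (n:ℝ) := Nat.cast_nonneg n
  have h1 : (0:ℝ) < (n:ℝ)+1 := by positivity
  rw [abs_mul, abs_mul, abs_of_nonneg h0, abs_of_pos h1,
    abs_of_pos (qco_pos ha hb (ha.trans hac) (n+1))]
  have := qco_le_one ha hb hb1 hac (n+1)
  have := qco_pos ha hb (ha.trans hac) (n+1)
  nlinarith

lemma t2b (ha : 0<a) (hb : 0<b) (hb1 : b<1) (hac : a<c) :
    ∀ n : ℕ, |(((n:ℝ)-1)*(n:ℝ)) * qco a b c n| ≤ 2 * ((n:ℝ)+1)^2 := by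
  intro n
  have h0 : (0:ℝ) ≤ (n:ℝ) := Nat.cast_nonneg n
  rw [abs_mul]
  have hq : |qco a b c n| ≤ 1 := by
    rw [abs_of_pos (qco_pos ha hb (ha.trans hac) n)]; exact qco_le_one ha hb hb1 hac n
  have h2 : |((n:ℝ)-1)*(n:ℝ)| ≤ 2*((n:ℝ)+1)^2 := by
    rw [abs_mul, abs_of_nonneg h0]
    have : |(n:ℝ)-1| ≤ (n:ℝ)+1 := by
      rw [abs_le]; constructor <;> linarith
    nlinarith [abs_nonneg ((n:ℝ)-1)]
  calc |((n:ℝ)-1)*(n:ℝ)| * |qco a b c n| ≤ |((n:ℝ)-1)*(n:ℝ)| * 1 :=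
        mul_le_mul_of_nonneg_left hq (abs_nonneg _)
    _ = |((n:ℝ)-1)*(n:ℝ)| := mul_one _
    _ ≤ 2*((n:ℝ)+1)^2 := h2

lemma t3b (ha : 0<a) (hb : 0<b) (hb1 : b<1) (hac : a<c) :
    ∀ n : ℕ, |(n:ℝ) * qco a b c n| ≤ 1 * ((n:ℝ)+1)^1 := by
  intro n
  have h0 : (0:ℝ) ≤ (n:ℝ) := Nat.cast_nonneg n
  rw [pow_one, one_mul, abs_mul, abs_of_nonneg h0,
    abs_of_pos (qco_pos ha hb (ha.trans hac) n)]
  nlinarith [qco_le_one ha hb hb1 hac n, qco_pos ha hb (ha.trans hac) n]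

lemma hyperF_eq (a b c x : ℝ) : hyperF a b c x = ∑' n : ℕ, qco a b c n * x^n := rfl

lemma hyperF_hasDeriv (ha : 0<a) (hb : 0<b) (hb1 : b<1) (hac : a<c)
    {x : ℝ} (hx : |x| < 1) : HasDerivAt (hyperF a b c) (FD a b c x) x := by
  have h := hasDerivAt_aux (qb ha hb hb1 hac) hx
  have e : FD a b c x = ∑' n : ℕ, ((n:ℝ)+1) * qco a b c (n+1) * x^n :=
    tsum_congr fun n => by push_cast; ring
  rw [e]
  exact h

lemma FD_hasDeriv (ha : 0<a) (hb : 0<b) (hb1 : b<1) (hac : a<c)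
    {x : ℝ} (hx : |x| < 1) : HasDerivAt (FD a b c) (FD2 a b c x) x := by
  have h := hasDerivAt_aux (db ha hb hb1 hac) hx
  have e : FD2 a b c x = ∑' n : ℕ, ((n:ℝ)+1) * ((((n+1:ℕ):ℝ)+1) * qco a b c (n+1+1)) * x^n := by
    rw [FD2]
    refine tsum_congr fun n => ?_
    push_cast
    ring
  rw [e]
  exact h

end

section
variable {a b c : ℝ}

lemma ode (ha : 0<a) (hb : 0<b) (hb1 : b<1) (hac : a<c) {x : ℝ} (hx : |x| < 1) :
    x*(1-x)*FD2 a b c x + (c-(a+b+1)*x)*FD a b c x - a*b*hyperF a b c x = 0 := by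
  have hc : 0 < c := ha.trans hac
  set q : ℕ → ℝ := qco a b c with hq
  set t1 : ℕ → ℝ := fun n => ((n:ℝ)*((n:ℝ)+1) * q (n+1)) * x^n with ht1
  set t2 : ℕ → ℝ := fun n => (((n:ℝ)-1)*(n:ℝ) * q n) * x^n with ht2
  set t3 : ℕ → ℝ := fun n => ((n:ℝ) * q n) * x^n with ht3
  have St1 : Summable t1 := summable_aux (t1b ha hb hb1 hac) hx
  have St2 : Summable t2 := summable_aux (t2b ha hb hb1 hac) hx
  have St3 : Summable t3 := summable_aux (t3b ha hb hb1 hac) hx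
  have Sq : Summable (fun n : ℕ => q n * x^n) := summable_aux (qb ha hb hb1 hac) hx
  have Sd : Summable (fun n : ℕ => (((n:ℝ)+1) * q (n+1)) * x^n) :=
    summable_aux (db ha hb hb1 hac) hx
  have e_xD2 : x * FD2 a b c x = ∑' n, t1 n := by
    rw [FD2, ← tsum_mul_left, tsum_shift St1 (by simp [ht1])]
    refine tsum_congr fun n => ?_
    simp only [ht1]
    push_cast
    ring
  have St2' : Summable (fun n => t2 (n+1)) := (summable_nat_add_iff 1).2 St2
  have e_x2D2 : x^2 * FD2 a b c x = ∑' n, t2 n := by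
    rw [FD2, ← tsum_mul_left, tsum_shift St2 (by simp [ht2]),
      tsum_shift St2' (by simp [ht2])]
    refine tsum_congr fun n => ?_
    simp only [ht2]
    push_cast
    ring
  have e_xD : x * FD a b c x = ∑' n, t3 n := by
    rw [FD, ← tsum_mul_left, tsum_shift St3 (by simp [ht3])]
    refine tsum_congr fun n => ?_
    simp only [ht3]
    push_cast
    ring
  have e_cD : c * FD a b c x = ∑' n : ℕ, c * ((((n:ℝ)+1) * q (n+1)) * x^n) := by
    rw [FD, ← tsum_mul_left]
  have e_abF : a*b*hyperF a b c x = ∑' n, (a*b) * (q n * x^n) := by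
    rw [hyperF_eq, ← tsum_mul_left]
  have main : x*(1-x)*FD2 a b c x + (c-(a+b+1)*x)*FD a b c x - a*b*hyperF a b c x
      = (x * FD2 a b c x) - (x^2 * FD2 a b c x) + (c * FD a b c x)
        - ((a+b+1) * (x * FD a b c x)) - (a*b*hyperF a b c x) := by ring
  rw [main, e_xD2, e_x2D2, e_xD, e_cD, e_abF, ← tsum_mul_left,
    ← Summable.tsum_sub St1 St2,
    ← Summable.tsum_add (St1.sub St2) (Sd.mul_left c),
    ← Summable.tsum_sub ((St1.sub St2).add (Sd.mul_left c)) (St3.mul_left (a+b+1)),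
    ← Summable.tsum_sub (((St1.sub St2).add (Sd.mul_left c)).sub (St3.mul_left (a+b+1)))
      (Sq.mul_left (a*b))]
  have key : ∀ n : ℕ, t1 n - t2 n + c * ((((n:ℝ)+1) * q (n+1)) * x^n)
      - (a+b+1) * t3 n - a*b* (q n * x^n) = 0 := by
    intro n
    have hr := qco_succ (a := a) (b := b) hc n
    simp only [ht1, ht2, ht3, hq] at *
    linear_combination (x^n) * hr
  calc ∑' n, (t1 n - t2 n + c * ((((n:ℝ)+1) * q (n+1)) * x^n)
      - (a+b+1) * t3 n - a*b* (q n * x^n)) = ∑' (n : ℕ), (0:ℝ) := tsum_congr key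
    _ = 0 := tsum_zero

end

section
variable {a b c : ℝ}

lemma F_ge_one (ha : 0<a) (hb : 0<b) (hb1 : b<1) (hac : a<c) {x : ℝ}
    (hx : 0 ≤ x) (hx1 : x < 1) : 1 ≤ hyperF a b c x := by
  have hc : 0 < c := ha.trans hac
  have hxa : |x| < 1 := by rwa [abs_of_nonneg hx]
  rw [hyperF_eq]
  have h0 : qco a b c 0 * x^0 = 1 := by rw [qco_zero]; norm_num
  calc (1:ℝ) = qco a b c 0 * x^0 := h0.symm
    _ ≤ ∑' n : ℕ, qco a b c n * x^n := by
        apply Summable.le_tsum (summable_aux (qb ha hb hb1 hac) hxa) 0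
        intro n _
        have := qco_pos ha hb hc n
        positivity

lemma FD_nonneg (ha : 0<a) (hb : 0<b) (hb1 : b<1) (hac : a<c) {x : ℝ}
    (hx : 0 ≤ x) (hx1 : x < 1) : 0 ≤ FD a b c x := by
  have hc : 0 < c := ha.trans hac
  rw [FD]
  apply tsum_nonneg
  intro n
  have := qco_pos ha hb hc (n+1)
  positivity

-- (i)  c(1-x) FD ≤ ab F
lemma bound1 (ha : 0<a) (hb : 0<b) (hb1 : b<1) (hac : a<c) (hbc : b<c) {x : ℝ}
    (hx : 0 ≤ x) (hx1 : x < 1) :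
    c * ((1-x) * FD a b c x) ≤ a*b*hyperF a b c x := by
  have hc : 0 < c := ha.trans hac
  have hxa : |x| < 1 := by rwa [abs_of_nonneg hx]
  set q : ℕ → ℝ := qco a b c with hq
  have Sq : Summable (fun n : ℕ => q n * x^n) := summable_aux (qb ha hb hb1 hac) hxa
  have Sd : Summable (fun n : ℕ => (((n:ℝ)+1) * q (n+1)) * x^n) :=
    summable_aux (db ha hb hb1 hac) hxa
  have St3 : Summable (fun n : ℕ => ((n:ℝ) * q n) * x^n) :=
    summable_aux (t3b ha hb hb1 hac) hxa
  have e_xD : x * FD a b c x = ∑' n : ℕ, ((n:ℝ) * q n) * x^n := by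
    rw [FD, ← tsum_mul_left,
      tsum_shift St3 (by simp)]
    refine tsum_congr fun n => ?_
    push_cast
    ring
  have expand : a*b*hyperF a b c x - c * ((1-x) * FD a b c x)
      = (a*b*hyperF a b c x) - (c * FD a b c x) + (c * (x * FD a b c x)) := by ring
  have e1 : a*b*hyperF a b c x = ∑' n : ℕ, (a*b) * (q n * x^n) := by
    rw [hyperF_eq, ← tsum_mul_left]
  have e2 : c * FD a b c x = ∑' n : ℕ, c * ((((n:ℝ)+1) * q (n+1)) * x^n) := by
    rw [FD, ← tsum_mul_left]
  have e3 : c * (x * FD a b c x) = ∑' n : ℕ, c * (((n:ℝ) * q n) * x^n) := by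
    rw [e_xD, ← tsum_mul_left]
  have key : 0 ≤ a*b*hyperF a b c x - c * ((1-x) * FD a b c x) := by
    rw [expand, e1, e2, e3,
      ← Summable.tsum_sub (Sq.mul_left (a*b)) (Sd.mul_left c),
      ← Summable.tsum_add ((Sq.mul_left (a*b)).sub (Sd.mul_left c)) (St3.mul_left c)]
    apply tsum_nonneg
    intro n
    have hr := qco_succ (a := a) (b := b) hc n
    have hqn := qco_pos ha hb hc n
    have hn : (0:ℝ) ≤ n := Nat.cast_nonneg n
    have hcn : (0:ℝ) < c + n := by positivity
    have hxn : (0:ℝ) ≤ x^n := by positivity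
    have coeff : ((a*b) * q n - c * (((n:ℝ)+1) * q (n+1)) + c * ((n:ℝ) * q n)) * (c+n)
        = q n * ((n:ℝ) * ((c-a)*(c-b))) := by linear_combination (-c) * hr
    have hco : 0 ≤ (a*b) * q n - c * (((n:ℝ)+1) * q (n+1)) + c * ((n:ℝ) * q n) := by
      have h2 : 0 ≤ q n * ((n:ℝ) * ((c-a)*(c-b))) := by
        have h3 : (0:ℝ) ≤ (c-a)*(c-b) := by
          apply mul_nonneg <;> linarith
        positivity
      nlinarith [coeff]
    calc (0:ℝ) ≤ ((a*b) * q n - c * (((n:ℝ)+1) * q (n+1)) + c * ((n:ℝ) * q n)) * x^n :=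
          mul_nonneg hco hxn
      _ = (a*b) * (q n * x^n) - c * ((((n:ℝ)+1) * q (n+1)) * x^n) + c * (((n:ℝ) * q n) * x^n) := by
          ring
  linarith

-- (ii)  (a+b-c) F ≤ (1-x) FD
lemma bound2 (ha : 0<a) (hb : 0<b) (hb1 : b<1) (hac : a<c) (hbc : b<c) {x : ℝ}
    (hx : 0 ≤ x) (hx1 : x < 1) :
    (a+b-c) * hyperF a b c x ≤ (1-x) * FD a b c x := by
  have hc : 0 < c := ha.trans hac
  have hxa : |x| < 1 := by rwa [abs_of_nonneg hx]
  set q : ℕ → ℝ := qco a b c with hq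
  have Sq : Summable (fun n : ℕ => q n * x^n) := summable_aux (qb ha hb hb1 hac) hxa
  have Sd : Summable (fun n : ℕ => (((n:ℝ)+1) * q (n+1)) * x^n) :=
    summable_aux (db ha hb hb1 hac) hxa
  have St3 : Summable (fun n : ℕ => ((n:ℝ) * q n) * x^n) :=
    summable_aux (t3b ha hb hb1 hac) hxa
  have e_xD : x * FD a b c x = ∑' n : ℕ, ((n:ℝ) * q n) * x^n := by
    rw [FD, ← tsum_mul_left, tsum_shift St3 (by simp)]
    refine tsum_congr fun n => ?_
    push_cast
    ring
  have expand : (1-x) * FD a b c x - (a+b-c) * hyperF a b c x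
      = (FD a b c x) - (x * FD a b c x) - ((a+b-c) * hyperF a b c x) := by ring
  have e1 : (a+b-c)*hyperF a b c x = ∑' n : ℕ, (a+b-c) * (q n * x^n) := by
    rw [hyperF_eq, ← tsum_mul_left]
  have key : 0 ≤ (1-x) * FD a b c x - (a+b-c) * hyperF a b c x := by
    rw [expand, e_xD, e1, FD,
      ← Summable.tsum_sub Sd St3,
      ← Summable.tsum_sub (Sd.sub St3) (Sq.mul_left (a+b-c))]
    apply tsum_nonneg
    intro n
    have hr := qco_succ (a := a) (b := b) hc n
    have hqn := qco_pos ha hb hc n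
    have hn : (0:ℝ) ≤ n := Nat.cast_nonneg n
    have hcn : (0:ℝ) < c + n := by positivity
    have hxn : (0:ℝ) ≤ x^n := by positivity
    have coeff : ((((n:ℝ)+1) * q (n+1)) - ((n:ℝ) * q n) - (a+b-c) * q n) * (c+n)
        = q n * ((c-a)*(c-b)) := by linear_combination hr
    have hco : 0 ≤ (((n:ℝ)+1) * q (n+1)) - ((n:ℝ) * q n) - (a+b-c) * q n := by
      have h2 : 0 ≤ q n * ((c-a)*(c-b)) := by
        have h3 : (0:ℝ) ≤ (c-a)*(c-b) := by apply mul_nonneg <;> linarith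
        positivity
      nlinarith [coeff]
    calc (0:ℝ) ≤ ((((n:ℝ)+1) * q (n+1)) - ((n:ℝ) * q n) - (a+b-c) * q n) * x^n :=
          mul_nonneg hco hxn
      _ = (((n:ℝ)+1) * q (n+1)) * x^n - ((n:ℝ) * q n) * x^n - (a+b-c) * (q n * x^n) := by ring
  linarith

-- (iii)  ab F ≤ c FD
lemma bound3 (ha : 0<a) (hb : 0<b) (hb1 : b<1) (hac : a<c) (hbc : b<c) {x : ℝ}
    (hx : 0 ≤ x) (hx1 : x < 1) :
    a*b*hyperF a b c x ≤ c * FD a b c x := by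
  have hc : 0 < c := ha.trans hac
  have hxa : |x| < 1 := by rwa [abs_of_nonneg hx]
  set q : ℕ → ℝ := qco a b c with hq
  have Sq : Summable (fun n : ℕ => q n * x^n) := summable_aux (qb ha hb hb1 hac) hxa
  have Sd : Summable (fun n : ℕ => (((n:ℝ)+1) * q (n+1)) * x^n) :=
    summable_aux (db ha hb hb1 hac) hxa
  have e2 : c * FD a b c x = ∑' n : ℕ, c * ((((n:ℝ)+1) * q (n+1)) * x^n) := by
    rw [FD, ← tsum_mul_left]
  have e1 : a*b*hyperF a b c x = ∑' n : ℕ, (a*b) * (q n * x^n) := by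
    rw [hyperF_eq, ← tsum_mul_left]
  have key : 0 ≤ c * FD a b c x - a*b*hyperF a b c x := by
    rw [e1, e2, ← Summable.tsum_sub (Sd.mul_left c) (Sq.mul_left (a*b))]
    apply tsum_nonneg
    intro n
    have hr := qco_succ (a := a) (b := b) hc n
    have hqn := qco_pos ha hb hc n
    have hn : (0:ℝ) ≤ n := Nat.cast_nonneg n
    have hcn : (0:ℝ) < c + n := by positivity
    have hxn : (0:ℝ) ≤ x^n := by positivity
    have coeff : (c * (((n:ℝ)+1) * q (n+1)) - (a*b) * q n) * (c+n)
        = q n * ((n:ℝ) * (c*(n:ℝ) + c*(a+b) - a*b)) := by linear_combination c * hr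
    have hco : 0 ≤ c * (((n:ℝ)+1) * q (n+1)) - (a*b) * q n := by
      have h3 : (0:ℝ) ≤ c*(n:ℝ) + c*(a+b) - a*b := by nlinarith
      have h2 : 0 ≤ q n * ((n:ℝ) * (c*(n:ℝ) + c*(a+b) - a*b)) := by positivity
      nlinarith [coeff]
    calc (0:ℝ) ≤ (c * (((n:ℝ)+1) * q (n+1)) - (a*b) * q n) * x^n := mul_nonneg hco hxn
      _ = c * ((((n:ℝ)+1) * q (n+1)) * x^n) - (a*b) * (q n * x^n) := by ring
  linarith

end

section
variable {a b c : ℝ}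

/-- derivative data for W on (0,1) -/
lemma W_deriv (ha : 0<a) (ha1 : a<1) (hb : 0<b) (hb1 : b<1) (hac : a<c) (hbc : b<c)
    {x : ℝ} (hx : 0 < x) (hx1 : x < 1) :
    ∃ w, HasDerivAt (fun y => y*(1-y)*FD a b c y/(hyperF a b c y) - y) w x ∧ w ≤ 0 := by
  have hc : 0 < c := ha.trans hac
  have hxa : |x| < 1 := by rw [abs_of_pos hx]; exact hx1
  have hP1 : 1 ≤ hyperF a b c x := F_ge_one ha hb hb1 hac hx.le hx1
  have hP0 : 0 < hyperF a b c x := lt_of_lt_of_le one_pos hP1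
  have hDnn : 0 ≤ FD a b c x := FD_nonneg ha hb hb1 hac hx.le hx1
  have h1x : 0 < 1 - x := by linarith
  -- derivative construction
  have hp : HasDerivAt (fun y : ℝ => y*(1-y)) (1-2*x) x := by
    have h := (hasDerivAt_id x).mul ((hasDerivAt_const x (1:ℝ)).sub (hasDerivAt_id x))
    refine h.congr_deriv ?_
    simp [id_eq]
    ring
  have hF := hyperF_hasDeriv ha hb hb1 hac hxa
  have hDd := FD_hasDeriv ha hb hb1 hac hxa
  have hnum : HasDerivAt (fun y => y*(1-y)*FD a b c y)
      ((1-2*x)*FD a b c x + x*(1-x)*FD2 a b c x) x := hp.mul hDd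
  have hW0 := hnum.div hF hP0.ne'
  have hW := hW0.sub (hasDerivAt_id x)
  refine ⟨_, hW, ?_⟩
  -- sign analysis
  have hode := ode ha hb hb1 hac (x := x) hxa
  have hv1 : a+b-c ≤ (1-x)*FD a b c x/(hyperF a b c x) := by
    rw [le_div_iff₀ hP0]
    exact bound2 ha hb hb1 hac hbc hx.le hx1
  have hv2 : a*b*(1-x) ≤ c*((1-x)*FD a b c x/(hyperF a b c x)) := by
    rw [mul_div_assoc', le_div_iff₀ hP0]
    have h3 := bound3 ha hb hb1 hac hbc hx.le hx1
    calc a*b*(1-x)*hyperF a b c x = (1-x)*(a*b*hyperF a b c x) := by ring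
      _ ≤ (1-x)*(c*FD a b c x) := mul_le_mul_of_nonneg_left h3 h1x.le
      _ = c*((1-x)*FD a b c x) := by ring
  have hv3 : c*((1-x)*FD a b c x/(hyperF a b c x)) ≤ a*b := by
    rw [mul_div_assoc', div_le_iff₀ hP0]
    exact bound1 ha hb hb1 hac hbc hx.le hx1
  have hkey := key a b c x ((1-x)*FD a b c x/(hyperF a b c x))
    ha ha1 hb hb1 hac hbc hx hx1 hv1 hv2 hv3
  have hvP : ((1-x)*FD a b c x/(hyperF a b c x)) * hyperF a b c x = (1-x)*FD a b c x :=
    div_mul_cancel₀ _ hP0.ne'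
  have e : (x*((1-x)*FD a b c x/(hyperF a b c x))^2
        - ((a+b-1)*x + 1-c)*((1-x)*FD a b c x/(hyperF a b c x))
        + (1-a*b)*(1-x))*(hyperF a b c x)^2
      = (1-x)*(x*(1-x)*(FD a b c x)^2 - ((a+b-1)*x + 1-c)*(FD a b c x)*(hyperF a b c x)
        + (1-a*b)*(hyperF a b c x)^2) := by
    linear_combination (x*(((1-x)*FD a b c x/(hyperF a b c x)) * hyperF a b c x
      + (1-x)*FD a b c x) - ((a+b-1)*x + 1-c)*hyperF a b c x) * hvP
  have hbr : 0 ≤ x*(1-x)*(FD a b c x)^2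
      - ((a+b-1)*x + 1-c)*(FD a b c x)*(hyperF a b c x) + (1-a*b)*(hyperF a b c x)^2 := by
    have h4 := mul_nonneg hkey (sq_nonneg (hyperF a b c x))
    rw [e] at h4
    nlinarith [h4, h1x]
  -- numerator ≤ P^2
  have hnumle : ((1-2*x)*FD a b c x + x*(1-x)*FD2 a b c x)*hyperF a b c x
      - (x*(1-x)*FD a b c x)*FD a b c x ≤ (hyperF a b c x)^2 := by
    have hsub : x*(1-x)*FD2 a b c x
        = a*b*hyperF a b c x - (c-(a+b+1)*x)*FD a b c x := by linarith [hode]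
    nlinarith [hbr, hsub]
  have hdiv : (((1-2*x)*FD a b c x + x*(1-x)*FD2 a b c x)*hyperF a b c x
      - (x*(1-x)*FD a b c x)*FD a b c x)/(hyperF a b c x)^2 ≤ 1 := by
    rw [div_le_one (by positivity)]
    exact hnumle
  rw [sub_nonpos]
  linarith [hdiv]

end

section
variable {a b c : ℝ}

lemma W_antitone (ha : 0<a) (ha1 : a<1) (hb : 0<b) (hb1 : b<1) (hac : a<c) (hbc : b<c) :
    AntitoneOn (fun y => y*(1-y)*FD a b c y/(hyperF a b c y) - y) (Set.Ioo 0 1) := by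
  apply antitoneOn_of_deriv_nonpos (convex_Ioo 0 1)
  · intro x hx
    obtain ⟨w, hw, -⟩ := W_deriv ha ha1 hb hb1 hac hbc hx.1 hx.2
    exact hw.continuousAt.continuousWithinAt
  · rw [interior_Ioo]
    intro x hx
    obtain ⟨w, hw, -⟩ := W_deriv ha ha1 hb hb1 hac hbc hx.1 hx.2
    exact hw.differentiableAt.differentiableWithinAt
  · rw [interior_Ioo]
    intro x hx
    obtain ⟨w, hw, hneg⟩ := W_deriv ha ha1 hb hb1 hac hbc hx.1 hx.2
    rw [hw.deriv]
    exact hneg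

lemma f_hasDeriv (ha : 0<a) (ha1 : a<1) (hb : 0<b) (hb1 : b<1) (hac : a<c) (hbc : b<c)
    {x : ℝ} (hx : 0 < x) (hx1 : x < 1) :
    HasDerivAt (fun y => y * (1 - y) * hyperF a b c y * hyperF a b c (1 - y))
      (((1-2*x)*hyperF a b c x + x*(1-x)*FD a b c x) * hyperF a b c (1-x)
        + (x*(1-x)*hyperF a b c x) * (-FD a b c (1-x))) x := by
  have hxa : |x| < 1 := by rw [abs_of_pos hx]; exact hx1
  have hya : |1-x| < 1 := by rw [abs_of_pos (by linarith)]; linarith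
  have hp : HasDerivAt (fun y : ℝ => y*(1-y)) (1-2*x) x := by
    have h := (hasDerivAt_id x).mul ((hasDerivAt_const x (1:ℝ)).sub (hasDerivAt_id x))
    refine h.congr_deriv ?_
    simp [id_eq]
    ring
  have hF := hyperF_hasDeriv ha hb hb1 hac hxa
  have h1 : HasDerivAt (fun y : ℝ => 1 - y) (-1) x := by
    have h := (hasDerivAt_const x (1:ℝ)).sub (hasDerivAt_id x)
    refine h.congr_deriv ?_
    simp [id_eq]
  have hG : HasDerivAt (fun y => hyperF a b c (1-y)) (-FD a b c (1-x)) x := by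
    have h := (hyperF_hasDeriv ha hb hb1 hac (x := 1-x) hya).comp x h1
    refine h.congr_deriv ?_
    ring
  exact (hp.mul hF).mul hG

lemma f_deriv_nonneg (ha : 0<a) (ha1 : a<1) (hb : 0<b) (hb1 : b<1) (hac : a<c) (hbc : b<c)
    {x : ℝ} (hx : 0 < x) (hx2 : x ≤ 1/2) :
    0 ≤ ((1-2*x)*hyperF a b c x + x*(1-x)*FD a b c x) * hyperF a b c (1-x)
        + (x*(1-x)*hyperF a b c x) * (-FD a b c (1-x)) := by
  have hx1 : x < 1 := by linarith
  have hy0 : 0 < 1 - x := by linarith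
  have hy1 : 1 - x < 1 := by linarith
  have hP0 : 0 < hyperF a b c x :=
    lt_of_lt_of_le one_pos (F_ge_one ha hb hb1 hac hx.le hx1)
  have hG0 : 0 < hyperF a b c (1-x) :=
    lt_of_lt_of_le one_pos (F_ge_one ha hb hb1 hac hy0.le hy1)
  have hW := W_antitone ha ha1 hb hb1 hac hbc (a := a)
    (Set.mem_Ioo.2 ⟨hx, hx1⟩) (Set.mem_Ioo.2 ⟨hy0, hy1⟩) (by linarith : x ≤ 1 - x)
  -- hW : W (1-x) ≤ W x
  have hdiff : 0 ≤ (x*(1-x)*FD a b c x/(hyperF a b c x) - x)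
      - ((1-x)*(1-(1-x))*FD a b c (1-x)/(hyperF a b c (1-x)) - (1-x)) := by
    simpa using sub_nonneg.2 hW
  have e : ((1-2*x)*hyperF a b c x + x*(1-x)*FD a b c x) * hyperF a b c (1-x)
        + (x*(1-x)*hyperF a b c x) * (-FD a b c (1-x))
      = hyperF a b c x * hyperF a b c (1-x) *
        ((x*(1-x)*FD a b c x/(hyperF a b c x) - x)
          - ((1-x)*(1-(1-x))*FD a b c (1-x)/(hyperF a b c (1-x)) - (1-x))) := by
    field_simp
    ring
  rw [e]
  exact mul_nonneg (mul_pos hP0 hG0).le hdiff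

end

/-- for `a,b ∈ (0,1)`, `c > 0`, `a < c`, `b < c`, the function
`f(x) = x(1−x)F(x)F(1−x)` is increasing on `(0,1/2]` and decreasing on `[1/2,1)`. -/
theorem stmt15 (a b c : ℝ) (ha : a ∈ Set.Ioo (0:ℝ) 1) (hb : b ∈ Set.Ioo (0:ℝ) 1)
    (hc : 0 < c) (hac : a < c) (hbc : b < c) :
    MonotoneOn (fun x => x * (1 - x) * hyperF a b c x * hyperF a b c (1 - x))
        (Set.Ioc 0 (1/2)) ∧
      AntitoneOn (fun x => x * (1 - x) * hyperF a b c x * hyperF a b c (1 - x))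
        (Set.Ico (1/2) 1) := by
  obtain ⟨ha0, ha1⟩ := ha
  obtain ⟨hb0, hb1⟩ := hb
  have hmono : MonotoneOn (fun x => x * (1 - x) * hyperF a b c x * hyperF a b c (1 - x))
      (Set.Ioc 0 (1/2)) := by
    apply monotoneOn_of_deriv_nonneg (convex_Ioc _ _)
    · intro x hx
      have hx1 : x < 1 := lt_of_le_of_lt hx.2 (by norm_num)
      exact (f_hasDeriv ha0 ha1 hb0 hb1 hac hbc hx.1 hx1).continuousAt.continuousWithinAt
    · rw [interior_Ioc]
      intro x hx
      have hx1 : x < 1 := lt_trans hx.2 (by norm_num)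
      exact (f_hasDeriv ha0 ha1 hb0 hb1 hac hbc hx.1 hx1).differentiableAt.differentiableWithinAt
    · rw [interior_Ioc]
      intro x hx
      have hx1 : x < 1 := lt_trans hx.2 (by norm_num)
      rw [(f_hasDeriv ha0 ha1 hb0 hb1 hac hbc hx.1 hx1).deriv]
      exact f_deriv_nonneg ha0 ha1 hb0 hb1 hac hbc hx.1 hx.2.le
  refine ⟨hmono, ?_⟩
  intro x hx y hy hxy
  have hsym : ∀ u : ℝ, (1-u) * (1 - (1-u)) * hyperF a b c (1-u) * hyperF a b c (1 - (1-u))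
      = u * (1 - u) * hyperF a b c u * hyperF a b c (1 - u) := by
    intro u
    have harg : 1 - (1-u) = u := by ring
    rw [harg]
    ring
  have h1y : (1 - y) ∈ Set.Ioc (0:ℝ) (1/2) := ⟨by linarith [hy.2], by linarith [hy.1]⟩
  have h1x : (1 - x) ∈ Set.Ioc (0:ℝ) (1/2) := ⟨by linarith [hx.2], by linarith [hx.1]⟩
  have := hmono h1y h1x (by linarith : 1 - y ≤ 1 - x)
  simp only at this ⊢
  calc y * (1 - y) * hyperF a b c y * hyperF a b c (1 - y)
      = (1-y) * (1 - (1-y)) * hyperF a b c (1-y) * hyperF a b c (1 - (1-y)) := (hsym y).symm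
    _ ≤ (1-x) * (1 - (1-x)) * hyperF a b c (1-x) * hyperF a b c (1 - (1-x)) := this
    _ = x * (1 - x) * hyperF a b c x * hyperF a b c (1 - x) := hsym x
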